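/- Let n, m ≥ 1, let p_A ∈ ℝ^n and p_B ∈ ℝ^m be probability vectors, let ε ∈ [0,1], and let λ̄ ∈ [0,1]^n, λ̃ ∈ [0,1]^m be scaling vectors with Λ_A := Σ_k λ̄_k p_A(k) > 0 and Λ_B := Σ_l λ̃_l p_B(l) > 0. Let η denote the uniform distribution on n·m outcomes. Then the vector q(a,b) := η + Σ_{k,l} (1−ε) λ̄_k λ̃_l p_A(k) p_B(l) (δ_{ka}δ_{lb} − η) equals (1−ε')·p̄_A(a)·p̃_B(b) + ε'·η, where p̄_A(k) = λ̄_k p_A(k)/Λ_A and p̃_B(l) = λ̃_l p_B(l)/Λ_B are probability vectors and ε' := 1 − (1−ε)Λ_A Λ_B satisfies ε ≤ ε' ≤ 1. In particular, q is again a noisy product (uncorrelated) distribution. -/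
import Mathlib


open Finset

/-- Factorized hyperbolic contractions are resource non-generating for total
correlations: the contracted distribution is again a noisy product
distribution with larger noise parameter. -/
theorem factorized_contraction_RNG (n m : ℕ) (hn : 1 ≤ n) (hm : 1 ≤ m)
    (pA : Fin n → ℝ) (pB : Fin m → ℝ)
    (hpA : ∀ k, 0 ≤ pA k) (hpAsum : ∑ k, pA k = 1)
    (hpB : ∀ l, 0 ≤ pB l) (hpBsum : ∑ l, pB l = 1)
    (ε : ℝ) (hε : ε ∈ Set.Icc (0 : ℝ) 1)
    (lb : Fin n → ℝ) (lt : Fin m → ℝ)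
    (hlb : ∀ k, lb k ∈ Set.Icc (0 : ℝ) 1) (hlt : ∀ l, lt l ∈ Set.Icc (0 : ℝ) 1)
    (hΛA : 0 < ∑ k, lb k * pA k) (hΛB : 0 < ∑ l, lt l * pB l) :
    (∀ k, 0 ≤ lb k * pA k / (∑ k', lb k' * pA k')) ∧
    (∑ k, lb k * pA k / (∑ k', lb k' * pA k')) = 1 ∧
    (∀ l, 0 ≤ lt l * pB l / (∑ l', lt l' * pB l')) ∧
    (∑ l, lt l * pB l / (∑ l', lt l' * pB l')) = 1 ∧
    ε ≤ 1 - (1 - ε) * (∑ k, lb k * pA k) * (∑ l, lt l * pB l) ∧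
    1 - (1 - ε) * (∑ k, lb k * pA k) * (∑ l, lt l * pB l) ≤ 1 ∧
    ∀ a : Fin n, ∀ b : Fin m,
      1 / ((n : ℝ) * m)
          + ∑ k, ∑ l, (1 - ε) * lb k * lt l * pA k * pB l *
            ((if k = a then (1 : ℝ) else 0) * (if l = b then (1 : ℝ) else 0)
              - 1 / ((n : ℝ) * m))
        = (1 - (1 - (1 - ε) * (∑ k, lb k * pA k) * (∑ l, lt l * pB l)))
            * (lb a * pA a / (∑ k', lb k' * pA k'))
            * (lt b * pB b / (∑ l', lt l' * pB l'))
          + (1 - (1 - ε) * (∑ k, lb k * pA k) * (∑ l, lt l * pB l))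
            * (1 / ((n : ℝ) * m)) := by
  have hΛA1 : (∑ k, lb k * pA k) ≤ 1 := by
    calc (∑ k, lb k * pA k) ≤ ∑ k, pA k := by
          apply Finset.sum_le_sum
          intro k _
          nlinarith [(hlb k).1, (hlb k).2, hpA k]
      _ = 1 := hpAsum
  have hΛB1 : (∑ l, lt l * pB l) ≤ 1 := by
    calc (∑ l, lt l * pB l) ≤ ∑ l, pB l := by
          apply Finset.sum_le_sum
          intro l _
          nlinarith [(hlt l).1, (hlt l).2, hpB l]
      _ = 1 := hpBsum
  refine ⟨?_, ?_, ?_, ?_, ?_, ?_, ?_⟩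
  · intro k
    apply div_nonneg _ hΛA.le
    exact mul_nonneg (hlb k).1 (hpA k)
  · rw [← Finset.sum_div, div_self hΛA.ne']
  · intro l
    apply div_nonneg _ hΛB.le
    exact mul_nonneg (hlt l).1 (hpB l)
  · rw [← Finset.sum_div, div_self hΛB.ne']
  · have hAB : (∑ k, lb k * pA k) * (∑ l, lt l * pB l) ≤ 1 :=
      mul_le_one₀ hΛA1 hΛB.le hΛB1
    nlinarith [hε.2, hAB, mul_nonneg hΛA.le hΛB.le]
  · nlinarith [hε.2, mul_nonneg hΛA.le hΛB.le]
  · intro a b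
    have hsum : (∑ k, ∑ l, (1 - ε) * lb k * lt l * pA k * pB l *
        ((if k = a then (1 : ℝ) else 0) * (if l = b then (1 : ℝ) else 0)
          - 1 / ((n : ℝ) * m)))
        = (1 - ε) * lb a * lt b * pA a * pB b
          - (1 - ε) * (∑ k, lb k * pA k) * (∑ l, lt l * pB l) * (1 / ((n : ℝ) * m)) := by
      have : ∀ k : Fin n, ∀ l : Fin m,
          (1 - ε) * lb k * lt l * pA k * pB l *
            ((if k = a then (1 : ℝ) else 0) * (if l = b then (1 : ℝ) else 0)
              - 1 / ((n : ℝ) * m))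
          = (if k = a then (if l = b then (1 - ε) * lb k * lt l * pA k * pB l else 0) else 0)
            - (1 - ε) * ((lb k * pA k) * (lt l * pB l)) * (1 / ((n : ℝ) * m)) := by
        intro k l; split_ifs <;> ring
      simp only [this, Finset.sum_sub_distrib]
      rw [show (∑ k, ∑ l, (if k = a then (if l = b then (1 - ε) * lb k * lt l * pA k * pB l else 0) else 0))
          = (1 - ε) * lb a * lt b * pA a * pB b by
        rw [Finset.sum_eq_single_of_mem a (Finset.mem_univ a)
          (fun k _ hk => by simp [hk])]
        rw [Finset.sum_eq_single_of_mem b (Finset.mem_univ b)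
          (fun l _ hl => by simp [hl])]
        simp]
      rw [show (∑ k, ∑ l, (1 - ε) * (lb k * pA k * (lt l * pB l)) * (1 / ((n : ℝ) * m)))
          = (1 - ε) * (∑ k, lb k * pA k) * (∑ l, lt l * pB l) * (1 / ((n : ℝ) * m)) from by
        calc (∑ k, ∑ l, (1 - ε) * (lb k * pA k * (lt l * pB l)) * (1 / ((n : ℝ) * m)))
            = ∑ k, (lb k * pA k) * ((1 - ε) * (∑ l, lt l * pB l) * (1 / ((n : ℝ) * m))) := by
              refine Finset.sum_congr rfl fun k _ => ?_
              simp only [Finset.mul_sum, Finset.sum_mul]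
              exact Finset.sum_congr rfl fun l _ => by ring
          _ = (1 - ε) * (∑ k, lb k * pA k) * (∑ l, lt l * pB l) * (1 / ((n : ℝ) * m)) := by
              rw [← Finset.sum_mul]
              ring]
    rw [hsum]
    have e1 : (1 - (1 - (1 - ε) * (∑ k, lb k * pA k) * (∑ l, lt l * pB l)))
            * (lb a * pA a / (∑ k', lb k' * pA k'))
            * (lt b * pB b / (∑ l', lt l' * pB l'))
        = (1 - ε) * lb a * lt b * pA a * pB b := by
      field_simp
      ring
    rw [e1]; ring
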